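/- Let S be a compact Hausdorff space with an associative operation * continuous in the left argument, let M be a minimal left ideal of S (a minimal nonempty subset with S*M ⊆ M that is closed), and let u ∈ M be an idempotent. Then u*M, with the operation *, is a group whose identity element is u. -/
import Mathlib


/-- If `M` is a minimal (closed) left ideal of a compact right topological semigroup `S`
and `u ∈ M` is an idempotent, then `u*M` is a group under `*` with identity `u`. -/
theorem uM_is_group_of_minimal_left_ideal
    (S : Type*) [TopologicalSpace S] [CompactSpace S] [T2Space S] [Mul S]
    (hassoc : ∀ p q r : S, p * q * r = p * (q * r))
    (hcont : ∀ q : S, Continuous fun p : S => p * q)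
    (M : Set S) (hne : M.Nonempty) (hclosed : IsClosed M)
    (hideal : ∀ s : S, ∀ m ∈ M, s * m ∈ M)
    (hmin : ∀ I : Set S, I ⊆ M → I.Nonempty → IsClosed I →
      (∀ s : S, ∀ x ∈ I, s * x ∈ I) → I = M)
    (u : S) (huM : u ∈ M) (hidem : u * u = u) :
    (u ∈ (fun m => u * m) '' M) ∧
    (∀ a ∈ (fun m => u * m) '' M, ∀ b ∈ (fun m => u * m) '' M,
      a * b ∈ (fun m => u * m) '' M) ∧
    (∀ a ∈ (fun m => u * m) '' M, u * a = a ∧ a * u = a) ∧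
    (∀ a ∈ (fun m => u * m) '' M, ∃ b ∈ (fun m => u * m) '' M,
      a * b = u ∧ b * a = u) := by
  set G : Set S := (fun m => u * m) '' M with hG
  have hGM : G ⊆ M := by
    rintro _ ⟨m, hm, rfl⟩
    exact hideal u m hm
  have huG : u ∈ G := ⟨u, huM, hidem⟩
  have hleftid : ∀ a ∈ G, u * a = a := by
    rintro _ ⟨m, hm, rfl⟩
    rw [← hassoc, hidem]
  -- left inverses
  have hleftinv : ∀ a ∈ G, ∃ b ∈ G, b * a = u := by
    intro a ha
    have haM : a ∈ M := hGM ha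
    have hrange : Set.range (fun s : S => s * a) = M := by
      apply hmin
      · rintro _ ⟨s, rfl⟩; exact hideal s a haM
      · exact ⟨u * a, u, rfl⟩
      · exact (isCompact_range (hcont a)).isClosed
      · rintro s _ ⟨t, rfl⟩
        exact ⟨s * t, show (s * t) * a = s * (t * a) from hassoc s t a⟩
    obtain ⟨s, hs⟩ : ∃ s : S, s * a = u := by
      have : u ∈ Set.range (fun s : S => s * a) := hrange ▸ huM
      exact this
    refine ⟨u * (s * u), ⟨s * u, hideal s u huM, rfl⟩, ?_⟩
    rw [hassoc, hassoc, hleftid a ha, hs, hidem]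
  -- two-sided inverses
  have hinv : ∀ a ∈ G, ∃ b ∈ G, a * b = u ∧ b * a = u := by
    intro a ha
    obtain ⟨b, hb, hba⟩ := hleftinv a ha
    obtain ⟨c, hc, hcb⟩ := hleftinv b hb
    have habG : a * b ∈ G := by
      obtain ⟨m, hm, rfl⟩ := ha
      exact ⟨m * b, hideal m b (hGM hb),
        show u * (m * b) = (u * m) * b from (hassoc u m b).symm⟩
    have hab : a * b = u := by
      calc a * b = u * (a * b) := (hleftid _ habG).symm
      _ = (c * b) * (a * b) := by rw [hcb]
      _ = c * ((b * a) * b) := by rw [hassoc, ← hassoc b a b]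
      _ = c * (u * b) := by rw [hba]
      _ = c * b := by rw [hleftid b hb]
      _ = u := hcb
    exact ⟨b, hb, hab, hba⟩
  refine ⟨huG, ?_, ?_, hinv⟩
  · rintro _ ⟨m, hm, rfl⟩ _ ⟨m', hm', rfl⟩
    refine ⟨m * (u * m'), hideal m _ (hideal u m' hm'), ?_⟩
    simp only [← hassoc]
  · intro a ha
    refine ⟨hleftid a ha, ?_⟩
    obtain ⟨b, hb, hab, hba⟩ := hinv a ha
    calc a * u = a * (b * a) := by rw [hba]
    _ = a * b * a := (hassoc a b a).symm
    _ = u * a := by rw [hab]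
    _ = a := hleftid a ha
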